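/- Every self-confidence profile z ∈ [0,1]^n such that |S(z)| = 2 and σ_j² ≤ σ_i² for every j ∈ S(z) and every i ∈ V is a non-strict Nash equilibrium (a Nash equilibrium that is not a strict Nash equilibrium). -/
import Mathlib


open Matrix Filter Topology Finset


open Matrix Filter Topology Finset

namespace Stmt18Aux

variable {n : ℕ} {P : Matrix (Fin n) (Fin n) ℝ}

def Qm (P : Matrix (Fin n) (Fin n) ℝ) (w : Fin n → ℝ) : Matrix (Fin n) (Fin n) ℝ :=
  (1 - Matrix.diagonal w) * P + Matrix.diagonal w

lemma Qm_apply (P : Matrix (Fin n) (Fin n) ℝ) (w : Fin n → ℝ) (i k : Fin n) :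
    Qm P w i k = (1 - w i) * P i k + (if i = k then w i else 0) := by
  have h1 : (1 : Matrix (Fin n) (Fin n) ℝ) - Matrix.diagonal w
      = Matrix.diagonal (fun i => 1 - w i) := by
    rw [← Matrix.diagonal_one, ← Matrix.diagonal_sub]
  rw [Qm, h1, Matrix.add_apply, Matrix.diagonal_mul, Matrix.diagonal_apply]

lemma Qm_nonneg (hPnn : ∀ i j, 0 ≤ P i j) {w : Fin n → ℝ}
    (hw : ∀ i, w i ∈ Set.Icc (0:ℝ) 1) (i k : Fin n) : 0 ≤ Qm P w i k := by
  rw [Qm_apply]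
  have h1 := (hw i).1; have h2 := (hw i).2; have h3 := hPnn i k
  have : (0:ℝ) ≤ (1 - w i) * P i k := mul_nonneg (by linarith) h3
  split <;> linarith

lemma Qm_row (hProw : ∀ i, ∑ j, P i j = 1) {w : Fin n → ℝ} (i : Fin n) :
    ∑ k, Qm P w i k = 1 := by
  simp only [Qm_apply, Finset.sum_add_distrib, ← Finset.mul_sum, hProw,
    Finset.sum_ite_eq, Finset.mem_univ, if_true]
  ring

lemma Qm_pow_nonneg (hPnn : ∀ i j, 0 ≤ P i j) {w : Fin n → ℝ}
    (hw : ∀ i, w i ∈ Set.Icc (0:ℝ) 1) (s : ℕ) (i k : Fin n) :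
    0 ≤ (Qm P w ^ s) i k := by
  induction s generalizing i k with
  | zero => simp [Matrix.one_apply]; split <;> norm_num
  | succ s ih =>
    rw [pow_succ', Matrix.mul_apply]
    exact Finset.sum_nonneg fun l _ => mul_nonneg (Qm_nonneg hPnn hw i l) (ih l k)

lemma Qm_pow_row (hProw : ∀ i, ∑ j, P i j = 1) {w : Fin n → ℝ} (s : ℕ) (i : Fin n) :
    ∑ k, (Qm P w ^ s) i k = 1 := by
  induction s generalizing i with
  | zero => simp [Matrix.one_apply]
  | succ s ih =>
    simp only [pow_succ', Matrix.mul_apply]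
    rw [Finset.sum_comm]
    calc ∑ l, ∑ k, Qm P w i l * (Qm P w ^ s) l k
        = ∑ l, Qm P w i l * ∑ k, (Qm P w ^ s) l k := by
          simp [Finset.mul_sum]
      _ = 1 := by simp only [ih, mul_one]; exact Qm_row hProw i

section Hfacts

variable {w : Fin n → ℝ} {Hw : Matrix (Fin n) (Fin n) ℝ}
variable (hHw : ∀ i j, Tendsto (fun t : ℕ => (Qm P w ^ t) i j) atTop (𝓝 (Hw i j)))

include hHw

lemma H_nonneg (hPnn : ∀ i j, 0 ≤ P i j) (hw : ∀ i, w i ∈ Set.Icc (0:ℝ) 1)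
    (i j : Fin n) : 0 ≤ Hw i j :=
  le_of_tendsto_of_tendsto' tendsto_const_nhds (hHw i j)
    fun s => Qm_pow_nonneg hPnn hw s i j

lemma H_row (hProw : ∀ i, ∑ j, P i j = 1) (i : Fin n) : ∑ j, Hw i j = 1 := by
  have h1 : Tendsto (fun t : ℕ => ∑ j, (Qm P w ^ t) i j) atTop (𝓝 (∑ j, Hw i j)) :=
    tendsto_finset_sum _ fun j _ => hHw i j
  have h2 : (fun t : ℕ => ∑ j, (Qm P w ^ t) i j) = fun _ => (1:ℝ) := by
    funext t; exact Qm_pow_row hProw t i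
  rw [h2] at h1
  exact (tendsto_nhds_unique tendsto_const_nhds h1).symm

lemma H_fix (i j : Fin n) : Hw i j = ∑ k, Qm P w i k * Hw k j := by
  have h1 : Tendsto (fun t : ℕ => (Qm P w ^ (t+1)) i j) atTop (𝓝 (Hw i j)) :=
    (hHw i j).comp (tendsto_add_atTop_nat 1)
  have h2 : Tendsto (fun t : ℕ => ∑ k, Qm P w i k * (Qm P w ^ t) k j) atTop
      (𝓝 (∑ k, Qm P w i k * Hw k j)) :=
    tendsto_finset_sum _ fun k _ => (hHw k j).const_mul _
  have h3 : (fun t : ℕ => (Qm P w ^ (t+1)) i j)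
      = fun t : ℕ => ∑ k, Qm P w i k * (Qm P w ^ t) k j := by
    funext t; rw [pow_succ', Matrix.mul_apply]
  rw [h3] at h1
  exact tendsto_nhds_unique h1 h2

lemma H_stubborn {i : Fin n} (hi : w i = 1) (j : Fin n) :
    Hw i j = if i = j then 1 else 0 := by
  have hrow : ∀ k, Qm P w i k = if i = k then 1 else 0 := by
    intro k; rw [Qm_apply, hi]; simp
  have hpow : ∀ t : ℕ, (Qm P w ^ t) i j = if i = j then 1 else 0 := by
    intro t
    induction t with
    | zero => simp [Matrix.one_apply]
    | succ t ih =>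
      rw [pow_succ', Matrix.mul_apply]
      rw [Finset.sum_eq_single i]
      · rw [hrow, if_pos rfl, one_mul, ih]
      · intro k _ hk; rw [hrow, if_neg (Ne.symm hk), zero_mul]
      · intro h; exact absurd (Finset.mem_univ i) h
  have h1 : Tendsto (fun t : ℕ => (Qm P w ^ t) i j) atTop
      (𝓝 ((if i = j then (1:ℝ) else 0))) := by
    simp only [hpow]; exact tendsto_const_nhds
  exact tendsto_nhds_unique (hHw i j) h1

lemma H_harm (hw : ∀ i, w i ∈ Set.Icc (0:ℝ) 1) {i : Fin n} (hi : w i ≠ 1) (j : Fin n) :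
    Hw i j = ∑ k, P i k * Hw k j := by
  have hlt : w i < 1 := lt_of_le_of_ne (hw i).2 hi
  have h := H_fix hHw i j
  have h2 : ∑ k, Qm P w i k * Hw k j
      = (1 - w i) * ∑ k, P i k * Hw k j + w i * Hw i j := by
    simp only [Qm_apply, add_mul, Finset.sum_add_distrib, ite_mul, zero_mul,
      Finset.sum_ite_eq, Finset.mem_univ, if_true, Finset.mul_sum, mul_assoc]
  rw [h2] at h
  have h3 : (1 - w i) * Hw i j = (1 - w i) * ∑ k, P i k * Hw k j := by ring_nf; linarith [h]
  exact mul_left_cancel₀ (by linarith : (1:ℝ) - w i ≠ 0) h3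

end Hfacts

/-- Maximum-principle uniqueness: a function P-harmonic off a nonempty "stubborn" set,
vanishing on it, vanishes everywhere. -/
lemma harm_zero (hPnn : ∀ i j, 0 ≤ P i j) (hProw : ∀ i, ∑ j, P i j = 1)
    (hPprim : ∃ m : ℕ, ∀ i j, 0 < (P ^ m) i j)
    (S : Fin n → Prop) (d : Fin n → ℝ)
    (hharm : ∀ i, ¬ S i → d i = ∑ k, P i k * d k)
    (hbound : ∀ s, S s → d s = 0)
    (hS : ∃ s, S s) : ∀ i, d i = 0 := by
  obtain ⟨s0, hs0⟩ := hS
  obtain ⟨m, hm⟩ := hPprim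
  have Ppow_nonneg : ∀ (q : ℕ) i j, 0 ≤ (P ^ q) i j := by
    intro q
    induction q with
    | zero => intro i j; simp [Matrix.one_apply]; split <;> norm_num
    | succ q ih =>
      intro i j
      rw [pow_succ', Matrix.mul_apply]
      exact Finset.sum_nonneg fun l _ => mul_nonneg (hPnn i l) (ih l j)
  have key : ∀ (e : Fin n → ℝ), (∀ i, ¬ S i → e i = ∑ k, P i k * e k) →
      (∀ s, S s → e s = 0) → ∀ i, e i ≤ 0 := by
    intro e eharm ebound
    obtain ⟨i0, _, hi0⟩ := Finset.exists_max_image (Finset.univ : Finset (Fin n)) e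
      ⟨s0, Finset.mem_univ s0⟩
    have hmax : ∀ k, e k ≤ e i0 := fun k => hi0 k (Finset.mem_univ k)
    suffices h : e i0 ≤ 0 by intro i; exact le_trans (hmax i) h
    have path : ∀ (q : ℕ) (i : Fin n), 0 < (P ^ q) i s0 → e i = e i0 → e i0 ≤ 0 := by
      intro q
      induction q with
      | zero =>
        intro i hpos heq
        have : i = s0 := by
          by_contra hne
          simp [Matrix.one_apply, hne] at hpos
        rw [← heq, this, ebound s0 hs0]
      | succ q ih =>
        intro i hpos heq
        by_cases hiS : S i
        · rw [← heq, ebound i hiS]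
        · obtain ⟨k, hk⟩ : ∃ k, 0 < P i k * (P ^ q) k s0 := by
            by_contra hcon
            push_neg at hcon
            rw [pow_succ', Matrix.mul_apply] at hpos
            exact absurd (Finset.sum_nonpos fun l _ => hcon l) (not_le.mpr hpos)
          obtain ⟨hPik, hPq⟩ : 0 < P i k ∧ 0 < (P ^ q) k s0 := by
            rcases mul_pos_iff.mp hk with h | ⟨h1, _⟩
            · exact h
            · exact absurd h1 (not_lt.mpr (hPnn i k))
          have hsum : ∑ l, P i l * (e i0 - e l) = 0 := by
            simp only [mul_sub, Finset.sum_sub_distrib, ← Finset.sum_mul, hProw i]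
            rw [← eharm i hiS, heq]; ring
          have hterm : ∀ l ∈ Finset.univ, 0 ≤ P i l * (e i0 - e l) :=
            fun l _ => mul_nonneg (hPnn i l) (sub_nonneg.mpr (hmax l))
          have hzero : P i k * (e i0 - e k) = 0 :=
            (Finset.sum_eq_zero_iff_of_nonneg hterm).mp hsum k (Finset.mem_univ k)
          have hek : e k = e i0 := by
            rcases mul_eq_zero.mp hzero with h | h
            · exact absurd h (ne_of_gt hPik)
            · linarith
          exact ih k hPq hek
    exact path m i0 (hm i0 s0) rfl
  intro i
  have h1 := key d hharm hbound i
  have h2 := key (fun k => -d k) (fun i hi => by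
    simp only [mul_neg, Finset.sum_neg_distrib]
    exact neg_inj.mpr (hharm i hi)) (fun s hs => by simp [hbound s hs]) i
  simp at h2
  linarith

lemma H_col_zero (hPnn : ∀ i j, 0 ≤ P i j) (hProw : ∀ i, ∑ j, P i j = 1)
    (hPprim : ∃ m : ℕ, ∀ i j, 0 < (P ^ m) i j)
    {w : Fin n → ℝ} {Hw : Matrix (Fin n) (Fin n) ℝ}
    (hHw : ∀ i j, Tendsto (fun t : ℕ => (Qm P w ^ t) i j) atTop (𝓝 (Hw i j)))
    (hw : ∀ i, w i ∈ Set.Icc (0:ℝ) 1)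
    (hex : ∃ s, w s = 1) {j : Fin n} (hj : w j ≠ 1) (i : Fin n) : Hw i j = 0 :=
  harm_zero hPnn hProw hPprim (fun k => w k = 1) (fun k => Hw k j)
    (fun k hk => H_harm hHw hw hk j)
    (fun s hs => by
      show Hw s j = 0
      rw [H_stubborn hHw hs j, if_neg]
      rintro rfl; exact hj hs)
    hex i

lemma H_eq (hPnn : ∀ i j, 0 ≤ P i j) (hProw : ∀ i, ∑ j, P i j = 1)
    (hPprim : ∃ m : ℕ, ∀ i j, 0 < (P ^ m) i j)
    {w w' : Fin n → ℝ} {Hw Hw' : Matrix (Fin n) (Fin n) ℝ}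
    (hHw : ∀ i j, Tendsto (fun t : ℕ => (Qm P w ^ t) i j) atTop (𝓝 (Hw i j)))
    (hHw' : ∀ i j, Tendsto (fun t : ℕ => (Qm P w' ^ t) i j) atTop (𝓝 (Hw' i j)))
    (hw : ∀ i, w i ∈ Set.Icc (0:ℝ) 1) (hw' : ∀ i, w' i ∈ Set.Icc (0:ℝ) 1)
    (hsame : ∀ k, w k = 1 ↔ w' k = 1)
    (hex : ∃ s, w s = 1) : ∀ i j, Hw i j = Hw' i j := by
  intro i j
  have h := harm_zero hPnn hProw hPprim (fun k => w k = 1) (fun k => Hw k j - Hw' k j)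
    (fun k hk => by
      show Hw k j - Hw' k j = ∑ l, P k l * (Hw l j - Hw' l j)
      rw [H_harm hHw hw hk j, H_harm hHw' hw' (fun h => hk ((hsame k).mpr h)) j]
      simp [mul_sub, Finset.sum_sub_distrib])
    (fun s hs => by
      show Hw s j - Hw' s j = 0
      rw [H_stubborn hHw hs j, H_stubborn hHw' ((hsame s).mp hs) j]; ring)
    hex i
  linarith

end Stmt18Aux


/-- Every self-confidence profile `z ∈ [0,1]ⁿ` with `|S(z)| = 2` and
`σ_j² ≤ σ_i²` for every `j ∈ S(z)` and every agent `i` is a non-strict Nash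
equilibrium (a Nash equilibrium that is not a strict Nash equilibrium). -/
theorem stmt_18 (n : ℕ) (hn : 2 ≤ n)
    (P : Matrix (Fin n) (Fin n) ℝ)
    (hPnn : ∀ i j, 0 ≤ P i j)
    (hProw : ∀ i, ∑ j, P i j = 1)
    (hPdiag : ∀ i, P i i = 0)
    (hPprim : ∃ m : ℕ, ∀ i j, 0 < (P ^ m) i j)
    (σ2 : Fin n → ℝ) (hσ : ∀ i, 0 < σ2 i)
    (H : (Fin n → ℝ) → Matrix (Fin n) (Fin n) ℝ)
    (hH : ∀ z : Fin n → ℝ, (∀ i, z i ∈ Set.Icc (0 : ℝ) 1) →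
      ∀ i j, Tendsto
        (fun t : ℕ => (((1 - Matrix.diagonal z) * P + Matrix.diagonal z) ^ t) i j)
        atTop (𝓝 (H z i j)))
    (z : Fin n → ℝ) (hz : ∀ i, z i ∈ Set.Icc (0 : ℝ) 1)
    (hcard : (Finset.univ.filter fun i => z i = 1).card = 2)
    (hmin : ∀ j, z j = 1 → ∀ i, σ2 j ≤ σ2 i) :
    (∀ i : Fin n, ∀ t ∈ Set.Icc (0 : ℝ) 1,
      ∑ j, (H z i j) ^ 2 * σ2 j ≤
        ∑ j, (H (Function.update z i t) i j) ^ 2 * σ2 j) ∧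
    ¬ (∀ i : Fin n, ∀ t ∈ Set.Icc (0 : ℝ) 1, t ≠ z i →
      ∑ j, (H z i j) ^ 2 * σ2 j <
        ∑ j, (H (Function.update z i t) i j) ^ 2 * σ2 j) := by
  classical
  have hH' : ∀ w : Fin n → ℝ, (∀ i, w i ∈ Set.Icc (0 : ℝ) 1) →
      ∀ i j, Tendsto (fun t : ℕ => ((Stmt18Aux.Qm P w) ^ t) i j) atTop (𝓝 (H w i j)) := hH
  obtain ⟨a, b, hne, hpair⟩ := Finset.card_eq_two.mp hcard
  have hmem : ∀ k : Fin n, z k = 1 ↔ (k = a ∨ k = b) := by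
    intro k
    have := Finset.ext_iff.mp hpair k
    simpa using this
  have ha : z a = 1 := (hmem a).mpr (Or.inl rfl)
  have hb : z b = 1 := (hmem b).mpr (Or.inr rfl)
  have hσab : σ2 a = σ2 b := le_antisymm (hmin a ha b) (hmin b hb a)
  -- validity of deviations
  have hupd : ∀ (i : Fin n) (t : ℝ), t ∈ Set.Icc (0:ℝ) 1 →
      ∀ k, Function.update z i t k ∈ Set.Icc (0:ℝ) 1 := by
    intro i t ht k
    rcases eq_or_ne k i with rfl | hk
    · simpa using ht
    · rw [Function.update_of_ne hk]; exact hz k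
  -- cost of a stubborn agent
  have costδ : ∀ (w : Fin n → ℝ), (∀ k, w k ∈ Set.Icc (0:ℝ) 1) → ∀ i, w i = 1 →
      ∑ j, (H w i j) ^ 2 * σ2 j = σ2 i := by
    intro w hw i hi
    rw [Finset.sum_eq_single i]
    · rw [Stmt18Aux.H_stubborn (hH' w hw) hi i, if_pos rfl]; ring
    · intro j _ hj
      rw [Stmt18Aux.H_stubborn (hH' w hw) hi j, if_neg (Ne.symm hj)]; ring
    · intro h; exact absurd (Finset.mem_univ i) h
  -- cost in a single-stubborn profile
  have cost_single : ∀ (w : Fin n → ℝ), (∀ k, w k ∈ Set.Icc (0:ℝ) 1) →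
      ∀ c, (∀ k, w k = 1 ↔ k = c) → ∀ i,
      ∑ j, (H w i j) ^ 2 * σ2 j = σ2 c := by
    intro w hw c hc i
    have hex : ∃ s, w s = 1 := ⟨c, (hc c).mpr rfl⟩
    have hz0 : ∀ j, j ≠ c → H w i j = 0 := fun j hj =>
      Stmt18Aux.H_col_zero hPnn hProw hPprim (hH' w hw) hw hex
        (fun h => hj ((hc j).mp h)) i
    have hic : H w i c = 1 := by
      have hr := Stmt18Aux.H_row (hH' w hw) hProw i
      rw [Finset.sum_eq_single c] at hr
      · exact hr
      · intro j _ hj; exact hz0 j hj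
      · intro h; exact absurd (Finset.mem_univ c) h
    rw [Finset.sum_eq_single c]
    · rw [hic]; ring
    · intro j _ hj; rw [hz0 j hj]; ring
    · intro h; exact absurd (Finset.mem_univ c) h
  -- cost at z for any agent: supported on {a, b}
  have hz_zero : ∀ (i j : Fin n), j ≠ a → j ≠ b → H z i j = 0 := by
    intro i j hja hjb
    exact Stmt18Aux.H_col_zero hPnn hProw hPprim (hH' z hz) hz ⟨a, ha⟩
      (fun h => by rcases (hmem j).mp h with rfl | rfl; exact hja rfl; exact hjb rfl) i
  have hz_cost : ∀ i, ∑ j, (H z i j) ^ 2 * σ2 j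
      = (H z i a) ^ 2 * σ2 a + (H z i b) ^ 2 * σ2 b := by
    intro i
    have hsub : ∑ j ∈ ({a, b} : Finset (Fin n)), (H z i j) ^ 2 * σ2 j
        = ∑ j, (H z i j) ^ 2 * σ2 j := by
      refine Finset.sum_subset (Finset.subset_univ _) ?_
      intro j _ hj
      simp only [Finset.mem_insert, Finset.mem_singleton, not_or] at hj
      rw [hz_zero i j hj.1 hj.2]; ring
    rw [← hsub, Finset.sum_pair hne]
  have hz_sum : ∀ i, H z i a + H z i b = 1 := by
    intro i
    have hr := Stmt18Aux.H_row (hH' z hz) hProw i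
    have hsub : ∑ j ∈ ({a, b} : Finset (Fin n)), H z i j = ∑ j, H z i j := by
      refine Finset.sum_subset (Finset.subset_univ _) ?_
      intro j _ hj
      simp only [Finset.mem_insert, Finset.mem_singleton, not_or] at hj
      exact hz_zero i j hj.1 hj.2
    rw [← Finset.sum_pair hne, hsub, hr]
  -- the cost at z is at most σ2 a (≤ everyone)
  have hz_le : ∀ i, ∑ j, (H z i j) ^ 2 * σ2 j ≤ σ2 a := by
    intro i
    have hx := Stmt18Aux.H_nonneg (hH' z hz) hPnn hz i a
    have hy := Stmt18Aux.H_nonneg (hH' z hz) hPnn hz i b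
    have hs := hz_sum i
    have key : H z i a ^ 2 + H z i b ^ 2 ≤ 1 := by nlinarith [mul_nonneg hx hy]
    rw [hz_cost i, ← hσab]
    nlinarith [hσ a, key]
  -- equality of costs when a stubborn agent deviates to t < 1
  have stub_dev : ∀ i : Fin n, z i = 1 → ∀ t : ℝ, t ∈ Set.Icc (0:ℝ) 1 → t < 1 →
      ∑ j, (H (Function.update z i t) i j) ^ 2 * σ2 j = σ2 i := by
    intro i hi t ht hlt
    obtain ⟨c, hc1, hci⟩ : ∃ c, z c = 1 ∧ c ≠ i := by
      rcases (hmem i).mp hi with rfl | rfl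
      · exact ⟨b, hb, hne.symm⟩
      · exact ⟨a, ha, hne⟩
    have hstub' : ∀ k, Function.update z i t k = 1 ↔ k = c := by
      intro k
      constructor
      · intro hk
        rcases eq_or_ne k i with rfl | hk2
        · rw [Function.update_self] at hk; exact absurd hk (ne_of_lt hlt)
        · rw [Function.update_of_ne hk2] at hk
          rcases (hmem i).mp hi with rfl | rfl
          · rcases (hmem k).mp hk with rfl | rfl
            · exact absurd rfl hk2
            · rcases (hmem c).mp hc1 with rfl | rfl
              · exact absurd rfl hci
              · rfl
          · rcases (hmem k).mp hk with rfl | rfl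
            · rcases (hmem c).mp hc1 with rfl | rfl
              · rfl
              · exact absurd rfl hci
            · exact absurd rfl hk2
      · rintro rfl
        rw [Function.update_of_ne hci]; exact hc1
    have := cost_single (Function.update z i t) (hupd i t ht) c hstub' i
    rw [this]
    exact (hmin c hc1 i).antisymm (hmin i hi c)
  refine ⟨?_, ?_⟩
  · -- Nash
    intro i t ht
    by_cases hi1 : z i = 1
    · rcases eq_or_lt_of_le ht.2 with h1 | hlt
      · have : Function.update z i t = z := by
          rw [h1, ← hi1, Function.update_eq_self]
        rw [this]
      · rw [stub_dev i hi1 t ht hlt, costδ z hz i hi1]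
    · rcases eq_or_lt_of_le ht.2 with h1 | hlt
      · -- deviate to become stubborn: cost σ2 i ≥ cost at z
        have hd : ∑ j, (H (Function.update z i t) i j) ^ 2 * σ2 j = σ2 i := by
          refine costδ _ (hupd i t ht) i ?_
          rw [Function.update_self, ← h1]
        rw [hd]
        exact le_trans (hz_le i) (hmin a ha i)
      · -- t < 1: same stubborn set, H unchanged
        have hsame : ∀ k, z k = 1 ↔ Function.update z i t k = 1 := by
          intro k
          rcases eq_or_ne k i with rfl | hk
          · rw [Function.update_self]
            exact ⟨fun h => absurd h hi1, fun h => absurd h (ne_of_lt hlt)⟩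
          · rw [Function.update_of_ne hk]
        have heq := Stmt18Aux.H_eq hPnn hProw hPprim (hH' z hz)
          (hH' _ (hupd i t ht)) hz (hupd i t ht) hsame ⟨a, ha⟩
        refine le_of_eq (Finset.sum_congr rfl fun j _ => ?_)
        rw [heq i j]
  · -- not strict
    intro hstrict
    have h0 : (0:ℝ) ∈ Set.Icc (0:ℝ) 1 := ⟨le_refl _, zero_le_one⟩
    have hne0 : (0:ℝ) ≠ z a := by rw [ha]; norm_num
    have hlt := hstrict a 0 h0 hne0
    rw [stub_dev a ha 0 h0 zero_lt_one, costδ z hz a ha] at hlt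
    exact lt_irrefl _ hlt
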